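/- arXiv:2510.23974 — 2 statements merged into one kernel-verified Lean document; each statement's English description precedes it below -/
import Mathlib

section
/- Let E be a real inner product space and let x, y ∈ E be nonzero. Then the gradient of the cosine similarity map z ↦ g(z; y) = ⟪z, y⟫ / (‖z‖ ‖y‖) at the point x, namely (1 / (‖x‖ ‖y‖)) · ( y − (⟪y, x⟫ / ‖x‖²) · x ), has norm at most 1 / ‖x‖. In particular, if ‖x‖ ≥ K for some K > 0, the gradient norm is at most 1/K. -/
open scoped RealInnerProductSpace

lemma resid_le {E : Type*} [NormedAddCommGroup E] [InnerProductSpace ℝ E]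
    (x y : E) (hx : x ≠ 0) :
    ‖y - (⟪y, x⟫ / ‖x‖ ^ 2) • x‖ ≤ ‖y‖ := by
  have hx2 : (0:ℝ) < ‖x‖ ^ 2 := pow_pos (norm_pos_iff.mpr hx) 2
  have hsq : ‖y - (⟪y, x⟫ / ‖x‖ ^ 2) • x‖ ^ 2 ≤ ‖y‖ ^ 2 := by
    rw [norm_sub_sq_real, real_inner_smul_right, norm_smul, Real.norm_eq_abs, mul_pow, sq_abs]
    have key : (⟪y, x⟫ / ‖x‖ ^ 2) ^ 2 * ‖x‖ ^ 2 = ⟪y, x⟫ ^ 2 / ‖x‖ ^ 2 := by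
      field_simp
    have key2 : 2 * (⟪y, x⟫ / ‖x‖ ^ 2 * ⟪y, x⟫) = 2 * (⟪y, x⟫ ^ 2 / ‖x‖ ^ 2) := by ring
    rw [key, key2]
    have : 0 ≤ ⟪y, x⟫ ^ 2 / ‖x‖ ^ 2 := div_nonneg (sq_nonneg _) hx2.le
    linarith
  nlinarith [norm_nonneg (y - (⟪y, x⟫ / ‖x‖ ^ 2) • x), norm_nonneg y]

/-- The gradient of the cosine similarity `z ↦ ⟪z, y⟫ / (‖z‖‖y‖)` at a nonzero point `x`,
namely `(1 / (‖x‖‖y‖)) • (y - (⟪y, x⟫ / ‖x‖²) • x)`, has norm at most `1 / ‖x‖`; in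
particular, if `‖x‖ ≥ K > 0` then its norm is at most `1 / K`. -/
theorem stmt5 {E : Type*} [NormedAddCommGroup E] [InnerProductSpace ℝ E]
    (x y : E) (hx : x ≠ 0) (hy : y ≠ 0) :
    ‖(1 / (‖x‖ * ‖y‖)) • (y - (⟪y, x⟫ / ‖x‖ ^ 2) • x)‖ ≤ 1 / ‖x‖ ∧
    ∀ K : ℝ, 0 < K → K ≤ ‖x‖ →
      ‖(1 / (‖x‖ * ‖y‖)) • (y - (⟪y, x⟫ / ‖x‖ ^ 2) • x)‖ ≤ 1 / K := by
  have hxn : (0:ℝ) < ‖x‖ := norm_pos_iff.mpr hx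
  have hyn : (0:ℝ) < ‖y‖ := norm_pos_iff.mpr hy
  have hr := resid_le x y hx
  have hmain : ‖(1 / (‖x‖ * ‖y‖)) • (y - (⟪y, x⟫ / ‖x‖ ^ 2) • x)‖ ≤ 1 / ‖x‖ := by
    rw [norm_smul, Real.norm_eq_abs, abs_of_nonneg (by positivity)]
    calc 1 / (‖x‖ * ‖y‖) * ‖y - (⟪y, x⟫ / ‖x‖ ^ 2) • x‖
        ≤ 1 / (‖x‖ * ‖y‖) * ‖y‖ := by
          apply mul_le_mul_of_nonneg_left hr (by positivity)
      _ = 1 / ‖x‖ := by field_simp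
  exact ⟨hmain, fun K hK hKx => hmain.trans (one_div_le_one_div_of_le hK hKx)⟩
end

section
/- Let E be a real inner product space, let y ∈ E be nonzero, let K > 0, and let S ⊆ E be a convex set such that ‖z‖ ≥ K for all z ∈ S. Then for all x, x' ∈ S, the cosine similarity satisfies | g(x; y) − g(x'; y) | ≤ (1/K) · ‖x − x'‖. -/
open scoped RealInnerProductSpace

private lemma norm_hasFDerivAt' {E : Type*} [NormedAddCommGroup E] [InnerProductSpace ℝ E]
    {z : E} (hz : z ≠ 0) :
    HasFDerivAt (fun w : E => ‖w‖) ((‖z‖⁻¹ : ℝ) • innerSL ℝ z) z := by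
  have hne : ‖z‖ ≠ 0 := norm_ne_zero_iff.mpr hz
  have h0 : (‖z‖ : ℝ) ^ 2 ≠ 0 := pow_ne_zero 2 hne
  have h := ((hasStrictFDerivAt_norm_sq z).hasFDerivAt).sqrt h0
  have e1 : (fun y : E => Real.sqrt (‖y‖ ^ 2)) = fun y : E => ‖y‖ := by
    funext w; rw [Real.sqrt_sq (norm_nonneg w)]
  rw [e1] at h
  convert h using 1
  rw [Real.sqrt_sq (norm_nonneg z)]
  ext w
  simp only [ContinuousLinearMap.coe_smul', Pi.smul_apply, smul_eq_mul,
    ContinuousLinearMap.smul_apply, two_smul, innerSL_apply_apply, ContinuousLinearMap.add_apply]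
  field_simp
  ring

private lemma cos_hasFDerivAt' {E : Type*} [NormedAddCommGroup E] [InnerProductSpace ℝ E]
    (u : E) {z : E} (hz : z ≠ 0) :
    HasFDerivAt (fun w : E => ⟪w, u⟫ / ‖w‖)
      (innerSL ℝ ((‖z‖⁻¹ : ℝ) • u - (⟪z, u⟫ / ‖z‖ ^ 3) • z)) z := by
  have hne : ‖z‖ ≠ 0 := norm_ne_zero_iff.mpr hz
  have h1 : HasFDerivAt (fun w : E => ⟪w, u⟫) (innerSL ℝ u) z := by
    have := (innerSL ℝ u).hasFDerivAt (x := z)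
    have e : (fun w : E => ⟪w, u⟫) = fun w : E => (innerSL ℝ u) w := by
      funext w; simp [innerSL_apply_apply, real_inner_comm]
    rw [e]; exact this
  have hinv : HasFDerivAt (fun w : E => ‖w‖⁻¹)
      ((-(‖z‖ ^ 2)⁻¹ : ℝ) • ((‖z‖⁻¹ : ℝ) • innerSL ℝ z)) z := by
    have := (hasDerivAt_inv hne).comp_hasFDerivAt z (norm_hasFDerivAt' hz)
    exact this
  have h3 := h1.mul hinv
  simp only [div_eq_mul_inv]
  refine h3.congr_fderiv ?_
  ext w
  simp only [innerSL_apply_apply, inner_sub_left, inner_smul_left, RCLike.inner_apply,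
    ContinuousLinearMap.coe_smul', ContinuousLinearMap.coe_sub', Pi.sub_apply,
    Pi.smul_apply, smul_eq_mul, ContinuousLinearMap.smul_apply, conj_trivial,
    ContinuousLinearMap.add_apply, real_inner_comm u w]
  field_simp
  ring

/-- Lemma 4 of the appendix (Lipschitz property of cosine similarity away from the origin):
if `S` is convex and `‖z‖ ≥ K > 0` on `S`, then for all `x, x' ∈ S`,
`|g(x; y) − g(x'; y)| ≤ (1/K)‖x − x'‖` where `g(x; y) = ⟪x, y⟫ / (‖x‖‖y‖)`. -/
theorem stmt6 {E : Type*} [NormedAddCommGroup E] [InnerProductSpace ℝ E]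
    (y : E) (hy : y ≠ 0) (K : ℝ) (hK : 0 < K) (S : Set E) (hS : Convex ℝ S)
    (hnorm : ∀ z ∈ S, K ≤ ‖z‖) :
    ∀ x ∈ S, ∀ x' ∈ S,
      |⟪x, y⟫ / (‖x‖ * ‖y‖) - ⟪x', y⟫ / (‖x'‖ * ‖y‖)| ≤ (1 / K) * ‖x - x'‖ := by
  intro x hx x' hx'
  set u : E := (‖y‖⁻¹ : ℝ) • y with hu
  have hyne : ‖y‖ ≠ 0 := norm_ne_zero_iff.mpr hy
  have hun : ‖u‖ = 1 := by
    rw [hu, norm_smul, norm_inv, norm_norm, inv_mul_cancel₀ hyne]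
  have hfeq : ∀ z : E, ⟪z, u⟫ / ‖z‖ = ⟪z, y⟫ / (‖z‖ * ‖y‖) := by
    intro z
    rw [hu, real_inner_smul_right]
    field_simp
  set f : E → ℝ := fun w => ⟪w, u⟫ / ‖w‖ with hf
  set f' : E → (E →L[ℝ] ℝ) :=
    fun z => innerSL ℝ ((‖z‖⁻¹ : ℝ) • u - (⟪z, u⟫ / ‖z‖ ^ 3) • z) with hf'
  have hzne : ∀ z ∈ S, z ≠ 0 := by
    intro z hz h0
    have := hnorm z hz
    rw [h0, norm_zero] at this
    linarith
  have hderiv : ∀ z ∈ S, HasFDerivWithinAt f (f' z) S z :=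
    fun z hz => (cos_hasFDerivAt' u (hzne z hz)).hasFDerivWithinAt
  have hbound : ∀ z ∈ S, ‖f' z‖ ≤ 1 / K := by
    intro z hz
    have hKz := hnorm z hz
    have hzn : (0:ℝ) < ‖z‖ := lt_of_lt_of_le hK hKz
    set c : ℝ := ⟪z, u⟫ with hc
    set w : E := (‖z‖⁻¹ : ℝ) • u - (c / ‖z‖ ^ 3) • z with hw
    have hw2 : ‖w‖ ^ 2 = ‖z‖⁻¹ ^ 2 - c ^ 2 / ‖z‖ ^ 4 := by
      rw [hw, ← real_inner_self_eq_norm_sq]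
      simp only [inner_sub_left, inner_sub_right, real_inner_smul_left,
        real_inner_smul_right, real_inner_comm z u, ← hc]
      rw [real_inner_self_eq_norm_sq, real_inner_self_eq_norm_sq]
      rw [hun]
      field_simp
      ring
    have hwle : ‖w‖ ^ 2 ≤ (1 / K) ^ 2 := by
      have h1 : ‖z‖⁻¹ ^ 2 ≤ (1 / K) ^ 2 := by
        have hK2 : K ^ 2 ≤ ‖z‖ ^ 2 := pow_le_pow_left₀ hK.le hKz 2
        rw [inv_pow, div_pow, one_pow, one_div]
        gcongr
      have h2 : 0 ≤ c ^ 2 / ‖z‖ ^ 4 := by positivity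
      linarith [hw2]
    have hwn : ‖w‖ ≤ 1 / K := by
      have := Real.sqrt_le_sqrt hwle
      rwa [Real.sqrt_sq (norm_nonneg w), Real.sqrt_sq (by positivity)] at this
    calc ‖f' z‖ = ‖w‖ := by rw [hf', innerSL_apply_norm]
    _ ≤ 1 / K := hwn
  have key := hS.norm_image_sub_le_of_norm_hasFDerivWithin_le hderiv hbound hx' hx
  rw [Real.norm_eq_abs] at key
  rw [← hfeq x, ← hfeq x']
  exact key
end
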